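/- arXiv:2401.08024 — 3 statements merged into one kernel-verified Lean document; each statement's English description precedes it below -/
import Mathlib

section
/- For the general AdaBB iteration, the quantities P_k and M_k satisfy: P_k = α_k·θ_k for all k ≥ 1, and, for all k ≥ 0, 2M_{k+1} ≤ 1 and P_{k+1} ≤ P_k + α_k. -/
open scoped RealInnerProductSpace
open Finset Filter

noncomputable section

/-- The general AdaBB iteration (Algorithm 2 of the paper) for a convex differentiable
function `f : ℝⁿ → ℝ` that attains its minimum.  `f'` is the gradient of `f`,
`x` the iterates, `α` the stepsizes, `θ` the stepsize ratios and `lam` the short BB stepsizes. -/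
structure AdaBB (n : ℕ) where
  f : EuclideanSpace ℝ (Fin n) → ℝ
  f' : EuclideanSpace ℝ (Fin n) → EuclideanSpace ℝ (Fin n)
  x : ℕ → EuclideanSpace ℝ (Fin n)
  α : ℕ → ℝ
  θ : ℕ → ℝ
  lam : ℕ → ℝ
  hconv : ConvexOn ℝ Set.univ f
  hgrad : ∀ y, HasGradientAt f (f' y) y
  hmin : ∃ z, ∀ y, f z ≤ f y
  hα0 : 0 < α 0
  hθ0 : 0 ≤ θ 0
  hx1 : x 1 = x 0 - α 0 • f' (x 0)
  hne : ∀ k, f' (x (k + 1)) ≠ f' (x k)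
  hlam : ∀ k, lam (k + 1) =
    ⟪f' (x (k + 1)) - f' (x k), x (k + 1) - x k⟫ / ‖f' (x (k + 1)) - f' (x k)‖ ^ 2
  hlampos : ∀ k, 0 < lam (k + 1)
  hcase1 : ∀ k, α k ≤ lam (k + 1) →
    α (k + 1) = Real.sqrt (1 + θ k) * α k ∧ θ (k + 1) = α (k + 1) / α k
  hcase2 : ∀ k, α k / 2 < lam (k + 1) → lam (k + 1) < α k →
    (α (k + 1) = min (Real.sqrt (lam (k + 1) / (2 * (α k - lam (k + 1)))))
        (Real.sqrt ((1 + θ k) * lam (k + 1) / (2 * lam (k + 1) - α k))) * α k ∨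
      α (k + 1) = lam (k + 1)) ∧
    θ (k + 1) = 2 * α (k + 1) / α k - α (k + 1) / lam (k + 1)
  hcase3 : ∀ k, lam (k + 1) ≤ α k / 2 →
    (α (k + 1) = Real.sqrt (α k / (2 * (α k - lam (k + 1)))) * lam (k + 1) ∨
      α (k + 1) = lam (k + 1) / Real.sqrt 2) ∧
    θ (k + 1) = α (k + 1) / α k
  hstep : ∀ k, x (k + 2) = x (k + 1) - α (k + 1) • f' (x (k + 1))

namespace AdaBB

variable {n : ℕ}

/-- `M_k` (for `k ≥ 1`). -/
def M (S : AdaBB n) (k : ℕ) : ℝ :=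
  if S.α (k - 1) ≤ S.lam k then 0
  else if S.α (k - 1) / 2 < S.lam k then
    S.α k ^ 2 / (S.lam k * S.α (k - 1)) - S.α k ^ 2 / S.α (k - 1) ^ 2
  else S.α k ^ 2 / S.lam k ^ 2 - S.α k ^ 2 / (S.α (k - 1) * S.lam k)

/-- `P_k` for `k ≥ 1`. -/
def Paux (S : AdaBB n) (k : ℕ) : ℝ :=
  if S.α (k - 1) ≤ S.lam k then S.α k ^ 2 / S.α (k - 1)
  else if S.α (k - 1) / 2 < S.lam k then
    2 * S.α k ^ 2 / S.α (k - 1) - S.α k ^ 2 / S.lam k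
  else S.α k ^ 2 / S.α (k - 1)

/-- `P_k`, with the convention `P_0 = P_1 - α_0`. -/
def P (S : AdaBB n) (k : ℕ) : ℝ :=
  if k = 0 then S.Paux 1 - S.α 0 else S.Paux k

/-- `w_k = α_k + P_k - P_{k+1}`. -/
def w (S : AdaBB n) (k : ℕ) : ℝ := S.α k + S.P k - S.P (k + 1)

/-- The Lyapunov function `Υ_k` (for `k ≥ 1`), relative to a minimizer `xs` of `f`. -/
def Upsilon (S : AdaBB n) (xs : EuclideanSpace ℝ (Fin n)) (k : ℕ) : ℝ :=
  ‖S.x k - xs‖ ^ 2 + 2 * S.M k * ‖S.x k - S.x (k - 1)‖ ^ 2 +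
    (2 * S.α (k - 1) + 2 * S.P (k - 1)) * (S.f (S.x (k - 1)) - S.f xs)

end AdaBB

end

private lemma adabb_pos (n : ℕ) (S : AdaBB n) : ∀ k, 0 < S.α k ∧ 0 ≤ S.θ k := by
  intro k
  induction k with
  | zero => exact ⟨S.hα0, S.hθ0⟩
  | succ k ih =>
    obtain ⟨ha, hθ⟩ := ih
    have hl := S.hlampos k
    have h1θ : (0:ℝ) < 1 + S.θ k := by linarith
    rcases le_or_gt (S.α k) (S.lam (k+1)) with h1 | h1
    · obtain ⟨hA, hT⟩ := S.hcase1 k h1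
      have hApos : 0 < S.α (k+1) := by
        rw [hA]; exact mul_pos (Real.sqrt_pos.mpr h1θ) ha
      exact ⟨hApos, by rw [hT]; exact div_nonneg hApos.le ha.le⟩
    · rcases le_or_gt (S.lam (k+1)) (S.α k / 2) with h2 | h2
      · obtain ⟨hA, hT⟩ := S.hcase3 k h2
        have hsub : 0 < S.α k - S.lam (k+1) := by linarith
        have hApos : 0 < S.α (k+1) := by
          rcases hA with hA | hA <;> rw [hA]
          · exact mul_pos (Real.sqrt_pos.mpr (by positivity)) hl
          · positivity
        exact ⟨hApos, by rw [hT]; exact div_nonneg hApos.le ha.le⟩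
      · obtain ⟨hA, hT⟩ := S.hcase2 k h2 h1
        have hsub : 0 < S.α k - S.lam (k+1) := by linarith
        have h2l : 0 < 2 * S.lam (k+1) - S.α k := by linarith
        have hApos : 0 < S.α (k+1) := by
          rcases hA with hA | hA <;> rw [hA]
          · refine mul_pos (lt_min ?_ ?_) ha
            · exact Real.sqrt_pos.mpr (by positivity)
            · exact Real.sqrt_pos.mpr (by positivity)
          · exact hl
        refine ⟨hApos, ?_⟩
        rw [hT, sub_nonneg, div_le_div_iff₀ hl ha]
        nlinarith

private lemma adabb_Paux_eq (n : ℕ) (S : AdaBB n) (k : ℕ) :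
    S.Paux (k+1) = S.α (k+1) * S.θ (k+1) := by
  obtain ⟨ha, hθ⟩ := adabb_pos n S k
  have hl := S.hlampos k
  have ha' := ha.ne'
  have hl' := hl.ne'
  simp only [AdaBB.Paux, Nat.add_sub_cancel]
  rcases le_or_gt (S.α k) (S.lam (k+1)) with h1 | h1
  · obtain ⟨hA, hT⟩ := S.hcase1 k h1
    rw [if_pos h1, hT]
    field_simp
  · rcases le_or_gt (S.lam (k+1)) (S.α k / 2) with h2 | h2
    · obtain ⟨hA, hT⟩ := S.hcase3 k h2
      rw [if_neg (not_le.mpr h1), if_neg (not_lt.mpr h2), hT]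
      field_simp
    · obtain ⟨hA, hT⟩ := S.hcase2 k h2 h1
      rw [if_neg (not_le.mpr h1), if_pos h2, hT]
      field_simp

private lemma adabb_M_le (n : ℕ) (S : AdaBB n) (k : ℕ) : 2 * S.M (k+1) ≤ 1 := by
  obtain ⟨ha, hθ⟩ := adabb_pos n S k
  obtain ⟨hA, _⟩ := adabb_pos n S (k+1)
  have hl := S.hlampos k
  have h1θ : (0:ℝ) < 1 + S.θ k := by linarith
  simp only [AdaBB.M, Nat.add_sub_cancel]
  rcases le_or_gt (S.α k) (S.lam (k+1)) with h1 | h1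
  · rw [if_pos h1]; norm_num
  · have hsub : 0 < S.α k - S.lam (k+1) := by linarith
    rcases le_or_gt (S.lam (k+1)) (S.α k / 2) with h2 | h2
    · -- M = α²/λ² − α²/(aλ) = α²(a−λ)/(aλ²); need 2α²(a−λ) ≤ aλ²
      obtain ⟨hAe, _⟩ := S.hcase3 k h2
      have key : 2 * S.α (k+1) ^ 2 * (S.α k - S.lam (k+1)) ≤ S.α k * S.lam (k+1) ^ 2 := by
        rcases hAe with hAe | hAe
        · have hsq : S.α (k+1) ^ 2 = (S.α k / (2 * (S.α k - S.lam (k+1)))) * S.lam (k+1) ^ 2 := by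
            rw [hAe, mul_pow, Real.sq_sqrt (by positivity)]
          rw [hsq]
          have : (S.α k / (2 * (S.α k - S.lam (k+1)))) * (2 * (S.α k - S.lam (k+1))) = S.α k := by
            field_simp
          nlinarith [hl.le, sq_nonneg (S.lam (k+1))]
        · have hsq : S.α (k+1) ^ 2 = S.lam (k+1) ^ 2 / 2 := by
            rw [hAe, div_pow, Real.sq_sqrt (by norm_num : (0:ℝ) ≤ 2)]
          rw [hsq]
          nlinarith [sq_nonneg (S.lam (k+1))]
      rw [if_neg (not_le.mpr h1), if_neg (not_lt.mpr h2)]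
      have e : S.α (k+1) ^ 2 / S.lam (k+1) ^ 2 - S.α (k+1) ^ 2 / (S.α k * S.lam (k+1)) =
          S.α (k+1) ^ 2 * (S.α k - S.lam (k+1)) / (S.α k * S.lam (k+1) ^ 2) := by
        field_simp
      rw [e, ← mul_div_assoc, div_le_one (by positivity)]
      linarith [key]
    · -- M = α²/(λa) − α²/a²; need 2α²(a−λ) ≤ λa²
      obtain ⟨hAe, _⟩ := S.hcase2 k h2 h1
      have key : 2 * S.α (k+1) ^ 2 * (S.α k - S.lam (k+1)) ≤ S.lam (k+1) * S.α k ^ 2 := by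
        rcases hAe with hAe | hAe
        · have hle : S.α (k+1) ≤ Real.sqrt (S.lam (k+1) / (2 * (S.α k - S.lam (k+1)))) * S.α k := by
            rw [hAe]
            exact mul_le_mul_of_nonneg_right (min_le_left _ _) ha.le
          have hsq : S.α (k+1) ^ 2 ≤ (S.lam (k+1) / (2 * (S.α k - S.lam (k+1)))) * S.α k ^ 2 := by
            calc S.α (k+1) ^ 2 ≤ (Real.sqrt (S.lam (k+1) / (2 * (S.α k - S.lam (k+1)))) * S.α k) ^ 2 :=
                pow_le_pow_left₀ hA.le hle 2
            _ = _ := by rw [mul_pow, Real.sq_sqrt (by positivity)]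
          have : (S.lam (k+1) / (2 * (S.α k - S.lam (k+1)))) * (2 * (S.α k - S.lam (k+1))) = S.lam (k+1) := by
            field_simp
          nlinarith [sq_nonneg (S.α k)]
        · rw [hAe]
          nlinarith [sq_nonneg (S.α k - 2 * S.lam (k+1)), sq_nonneg (S.lam (k+1))]
      rw [if_neg (not_le.mpr h1), if_pos h2]
      have e : S.α (k+1) ^ 2 / (S.lam (k+1) * S.α k) - S.α (k+1) ^ 2 / S.α k ^ 2 =
          S.α (k+1) ^ 2 * (S.α k - S.lam (k+1)) / (S.lam (k+1) * S.α k ^ 2) := by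
        field_simp
      rw [e, ← mul_div_assoc, div_le_one (by positivity)]
      linarith [key]

private lemma adabb_Paux_le (n : ℕ) (S : AdaBB n) (k : ℕ) :
    S.Paux (k+1) ≤ S.α k * (1 + S.θ k) := by
  obtain ⟨ha, hθ⟩ := adabb_pos n S k
  obtain ⟨hA, _⟩ := adabb_pos n S (k+1)
  have hl := S.hlampos k
  have h1θ : (0:ℝ) < 1 + S.θ k := by linarith
  simp only [AdaBB.Paux, Nat.add_sub_cancel]
  rcases le_or_gt (S.α k) (S.lam (k+1)) with h1 | h1
  · obtain ⟨hAe, _⟩ := S.hcase1 k h1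
    rw [if_pos h1]
    have hsq : S.α (k+1) ^ 2 = (1 + S.θ k) * S.α k ^ 2 := by
      rw [hAe, mul_pow, Real.sq_sqrt h1θ.le]
    rw [hsq]
    rw [div_le_iff₀ ha]
    ring_nf
    nlinarith [sq_nonneg (S.α k)]
  · have hsub : 0 < S.α k - S.lam (k+1) := by linarith
    rcases le_or_gt (S.lam (k+1)) (S.α k / 2) with h2 | h2
    · obtain ⟨hAe, _⟩ := S.hcase3 k h2
      rw [if_neg (not_le.mpr h1), if_neg (not_lt.mpr h2)]
      rw [div_le_iff₀ ha]
      have key : S.α (k+1) ^ 2 ≤ S.α k ^ 2 := by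
        rcases hAe with hAe | hAe
        · have hsq : S.α (k+1) ^ 2 = (S.α k / (2 * (S.α k - S.lam (k+1)))) * S.lam (k+1) ^ 2 := by
            rw [hAe, mul_pow, Real.sq_sqrt (by positivity)]
          have h4 : S.α (k+1) ^ 2 * (2 * (S.α k - S.lam (k+1))) = S.α k * S.lam (k+1) ^ 2 := by
            rw [hsq]; field_simp
          nlinarith [h4, mul_pos ha hsub, mul_le_mul_of_nonneg_left h2 hl.le,
            mul_le_mul_of_nonneg_right h2 ha.le, mul_pos ha ha, sq_nonneg (S.lam (k+1))]
        · have hsq : S.α (k+1) ^ 2 = S.lam (k+1) ^ 2 / 2 := by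
            rw [hAe, div_pow, Real.sq_sqrt (by norm_num : (0:ℝ) ≤ 2)]
          nlinarith [hl.le]
      nlinarith [mul_pos ha ha]
    · obtain ⟨hAe, _⟩ := S.hcase2 k h2 h1
      rw [if_neg (not_le.mpr h1), if_pos h2]
      have h2l : 0 < 2 * S.lam (k+1) - S.α k := by linarith
      have key : S.α (k+1) ^ 2 * (2 * S.lam (k+1) - S.α k) ≤ (1 + S.θ k) * S.lam (k+1) * S.α k ^ 2 := by
        rcases hAe with hAe | hAe
        · have hle : S.α (k+1) ≤
              Real.sqrt ((1 + S.θ k) * S.lam (k+1) / (2 * S.lam (k+1) - S.α k)) * S.α k := by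
            rw [hAe]
            exact mul_le_mul_of_nonneg_right (min_le_right _ _) ha.le
          have hsq : S.α (k+1) ^ 2 ≤
              ((1 + S.θ k) * S.lam (k+1) / (2 * S.lam (k+1) - S.α k)) * S.α k ^ 2 := by
            calc S.α (k+1) ^ 2 ≤ (Real.sqrt ((1 + S.θ k) * S.lam (k+1) / (2 * S.lam (k+1) - S.α k)) * S.α k) ^ 2 :=
                pow_le_pow_left₀ hA.le hle 2
            _ = _ := by rw [mul_pow, Real.sq_sqrt (by positivity)]
          have h3 : ((1 + S.θ k) * S.lam (k+1) / (2 * S.lam (k+1) - S.α k)) * (2 * S.lam (k+1) - S.α k)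
              = (1 + S.θ k) * S.lam (k+1) := by
            exact div_mul_cancel₀ _ h2l.ne'
          nlinarith [sq_nonneg (S.α k)]
        · rw [hAe]
          nlinarith [mul_pos hl hl, mul_pos ha hl, mul_pos ha ha,
            mul_nonneg (mul_nonneg hθ hl.le) ha.le]
      have e : 2 * S.α (k+1) ^ 2 / S.α k - S.α (k+1) ^ 2 / S.lam (k+1) =
          S.α (k+1) ^ 2 * (2 * S.lam (k+1) - S.α k) / (S.α k * S.lam (k+1)) := by
        field_simp
      rw [e, div_le_iff₀ (by positivity)]
      nlinarith [key]

/-- Lemma 3.2: for the general AdaBB iteration, `P_k = α_k·θ_k` for all `k ≥ 1`, and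
for all `k ≥ 0`, `2·M_{k+1} ≤ 1` and `P_{k+1} ≤ P_k + α_k`. -/
theorem adabb_MP_properties (n : ℕ) (S : AdaBB n) :
    (∀ k, 1 ≤ k → S.P k = S.α k * S.θ k) ∧
    (∀ k, 2 * S.M (k + 1) ≤ 1 ∧ S.P (k + 1) ≤ S.P k + S.α k) := by
  constructor
  · intro k hk
    obtain ⟨m, rfl⟩ := Nat.exists_eq_add_of_le hk
    simp only [AdaBB.P, Nat.add_eq_zero, one_ne_zero, false_and, if_false]
    have := adabb_Paux_eq n S m
    simpa [Nat.add_comm] using this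
  · intro k
    refine ⟨adabb_M_le n S k, ?_⟩
    cases k with
    | zero => simp [AdaBB.P]
    | succ m =>
      have h1 : S.P (m+1+1) = S.Paux (m+1+1) := by simp [AdaBB.P]
      have h2 : S.P (m+1) = S.Paux (m+1) := by simp [AdaBB.P]
      rw [h1, h2, adabb_Paux_eq n S m]
      have := adabb_Paux_le n S (m+1)
      linarith
end

section
/- For the general AdaBB iteration and every k ≥ 1: (1) the identity ‖x^{k+1} − x^k‖² = (α_k²/λ_k − α_k²/α_{k−1})·⟨∇f(x^k) − ∇f(x^{k−1}), x^k − x^{k−1}⟩ + (α_k²/α_{k−1})·⟨∇f(x^k), x^{k−1} − x^k⟩ holds; and (2) the bound ‖x^{k+1} − x^k‖² ≤ M_k‖x^k − x^{k−1}‖² + P_k·(f(x^{k−1}) − f(x^k)) holds. -/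
open scoped RealInnerProductSpace
open Finset Filter

section MyAux
open scoped RealInnerProductSpace

lemma convex_inner_le_aux {E : Type*} [NormedAddCommGroup E] [InnerProductSpace ℝ E]
    [CompleteSpace E] {f : E → ℝ} (hconv : ConvexOn ℝ Set.univ f) {x g : E}
    (hg : HasGradientAt f g x) (y : E) :
    ⟪g, y - x⟫ ≤ f y - f x := by
  set v := y - x with hv
  have hline : HasDerivAt (fun t : ℝ => x + t • v) v 0 := by
    simpa using ((hasDerivAt_id (0:ℝ)).smul_const v).const_add x
  have hd : HasDerivAt (fun t : ℝ => f (x + t • v)) ⟪g, v⟫ 0 := by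
    have h1 : HasFDerivAt f (InnerProductSpace.toDual ℝ E g) (x + (0:ℝ) • v) := by
      simpa using hg.hasFDerivAt
    have h2 := h1.comp_hasDerivAt 0 hline
    simp at h2
    exact h2
  have hgconv : ConvexOn ℝ Set.univ (fun t : ℝ => f (x + t • v)) := by
    have h := hconv.comp_affineMap (AffineMap.lineMap x y : ℝ →ᵃ[ℝ] E)
    simp only [Set.preimage_univ] at h
    have heq : (f ∘ (AffineMap.lineMap x y : ℝ →ᵃ[ℝ] E)) = fun t : ℝ => f (x + t • v) := by
      funext t
      simp [AffineMap.lineMap_apply, hv, add_comm]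
    rwa [heq] at h
  have hslope := hgconv.le_slope_of_hasDerivAt (Set.mem_univ (0:ℝ)) (Set.mem_univ (1:ℝ)) one_pos hd
  simpa [slope_def_field, hv] using hslope

namespace AdaBB
variable {n : ℕ} (S : AdaBB n)

lemma step' (k : ℕ) : S.x (k + 1) = S.x k - S.α k • S.f' (S.x k) := by
  cases k with
  | zero => exact S.hx1
  | succ m => exact S.hstep m

lemma alpha_pos_theta_nonneg : ∀ k, 0 < S.α k ∧ 0 ≤ S.θ k := by
  intro k
  induction k with
  | zero => exact ⟨S.hα0, S.hθ0⟩
  | succ m ih =>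
    obtain ⟨hα, hθ⟩ := ih
    have hlam := S.hlampos m
    rcases le_or_gt (S.α m) (S.lam (m + 1)) with h1 | h1
    · obtain ⟨ha, ht⟩ := S.hcase1 m h1
      have hpos : 0 < S.α (m + 1) := by
        rw [ha]
        exact mul_pos (Real.sqrt_pos.mpr (by linarith)) hα
      exact ⟨hpos, ht ▸ div_nonneg hpos.le hα.le⟩
    · rcases lt_or_ge (S.α m / 2) (S.lam (m + 1)) with h2 | h2
      · obtain ⟨ha, ht⟩ := S.hcase2 m h2 h1
        have hpos : 0 < S.α (m + 1) := by
          rcases ha with ha | ha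
          · rw [ha]
            refine mul_pos (lt_min ?_ ?_) hα
            · exact Real.sqrt_pos.mpr (div_pos hlam (by linarith))
            · exact Real.sqrt_pos.mpr (div_pos (mul_pos (by linarith) hlam) (by linarith))
          · rw [ha]; exact hlam
        refine ⟨hpos, ?_⟩
        rw [ht]
        have h3 : S.α (m + 1) / S.lam (m + 1) ≤ 2 * S.α (m + 1) / S.α m := by
          rw [div_le_div_iff₀ hlam hα]; nlinarith
        linarith
      · obtain ⟨ha, ht⟩ := S.hcase3 m h2
        have hpos : 0 < S.α (m + 1) := by
          rcases ha with ha | ha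
          · rw [ha]
            exact mul_pos (Real.sqrt_pos.mpr (div_pos hα (by linarith))) hlam
          · rw [ha]
            exact div_pos hlam (Real.sqrt_pos.mpr (by norm_num))
        exact ⟨hpos, ht ▸ div_nonneg hpos.le hα.le⟩

end AdaBB
end MyAux

set_option maxHeartbeats 1000000 in
open scoped RealInnerProductSpace in
/-- Lemma 3.3: for the general AdaBB iteration and every `k ≥ 1`, the identity (i1) and
the bound (e1) on `‖x^{k+1} - x^k‖²` hold. -/
theorem adabb_displacement (n : ℕ) (S : AdaBB n) (k : ℕ) (hk : 1 ≤ k) :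
    ‖S.x (k + 1) - S.x k‖ ^ 2 =
      (S.α k ^ 2 / S.lam k - S.α k ^ 2 / S.α (k - 1)) *
          ⟪S.f' (S.x k) - S.f' (S.x (k - 1)), S.x k - S.x (k - 1)⟫ +
        S.α k ^ 2 / S.α (k - 1) * ⟪S.f' (S.x k), S.x (k - 1) - S.x k⟫ ∧
    ‖S.x (k + 1) - S.x k‖ ^ 2 ≤
      S.M k * ‖S.x k - S.x (k - 1)‖ ^ 2 + S.P k * (S.f (S.x (k - 1)) - S.f (S.x k)) := by
  obtain ⟨j, rfl⟩ : ∃ j, k = j + 1 := ⟨k - 1, (Nat.succ_pred_eq_of_pos hk).symm⟩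
  simp only [Nat.add_sub_cancel]
  have hα0 : (0:ℝ) < S.α j := (S.alpha_pos_theta_nonneg j).1
  have hα1 : (0:ℝ) < S.α (j + 1) := (S.alpha_pos_theta_nonneg (j + 1)).1
  have hlm : (0:ℝ) < S.lam (j + 1) := S.hlampos j
  have hdne : S.f' (S.x (j + 1)) - S.f' (S.x j) ≠ 0 := sub_ne_zero.mpr (S.hne j)
  have hnpos : (0:ℝ) < ‖S.f' (S.x (j + 1)) - S.f' (S.x j)‖ := norm_pos_iff.mpr hdne
  have hdx : S.x (j + 1) - S.x j = -(S.α j • S.f' (S.x j)) := by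
    rw [S.step' j]; abel
  have hdx2 : S.x (j + 1 + 1) - S.x (j + 1) = -(S.α (j + 1) • S.f' (S.x (j + 1))) := by
    rw [S.step' (j + 1)]; abel
  have hdx' : S.x j - S.x (j + 1) = S.α j • S.f' (S.x j) := by
    rw [S.step' j]; abel
  have hL : ‖S.x (j + 1 + 1) - S.x (j + 1)‖ ^ 2 = S.α (j + 1) ^ 2 * ‖S.f' (S.x (j + 1))‖ ^ 2 := by
    rw [hdx2, norm_neg, norm_smul, mul_pow, Real.norm_eq_abs, sq_abs]
  have hDx : ‖S.x (j + 1) - S.x j‖ ^ 2 = S.α j ^ 2 * ‖S.f' (S.x j)‖ ^ 2 := by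
    rw [hdx, norm_neg, norm_smul, mul_pow, Real.norm_eq_abs, sq_abs]
  have hI1 : ⟪S.f' (S.x (j + 1)) - S.f' (S.x j), S.x (j + 1) - S.x j⟫ =
      S.lam (j + 1) * ‖S.f' (S.x (j + 1)) - S.f' (S.x j)‖ ^ 2 := by
    rw [S.hlam j]
    field_simp
  have hI1' : ⟪S.f' (S.x (j + 1)) - S.f' (S.x j), S.x (j + 1) - S.x j⟫ =
      S.α j * (‖S.f' (S.x j)‖ ^ 2 - ⟪S.f' (S.x (j + 1)), S.f' (S.x j)⟫) := by
    rw [hdx]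
    simp only [inner_neg_right, real_inner_smul_right, inner_sub_left,
      real_inner_self_eq_norm_sq]
    ring
  have hQ : ⟪S.f' (S.x (j + 1)), S.x j - S.x (j + 1)⟫ =
      S.α j * ⟪S.f' (S.x (j + 1)), S.f' (S.x j)⟫ := by
    rw [hdx', real_inner_smul_right]
  have hKey : S.lam (j + 1) * ‖S.f' (S.x (j + 1)) - S.f' (S.x j)‖ ^ 2 =
      S.α j * (‖S.f' (S.x j)‖ ^ 2 - ⟪S.f' (S.x (j + 1)), S.f' (S.x j)⟫) := by
    rw [← hI1, hI1']
  have hD : ‖S.f' (S.x (j + 1)) - S.f' (S.x j)‖ ^ 2 =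
      ‖S.f' (S.x (j + 1))‖ ^ 2 - 2 * ⟪S.f' (S.x (j + 1)), S.f' (S.x j)⟫ + ‖S.f' (S.x j)‖ ^ 2 :=
    norm_sub_sq_real _ _
  have hconvQ : ⟪S.f' (S.x (j + 1)), S.x j - S.x (j + 1)⟫ ≤
      S.f (S.x j) - S.f (S.x (j + 1)) :=
    convex_inner_le_aux S.hconv (S.hgrad (S.x (j + 1))) (S.x j)
  have hid : ‖S.x (j + 1 + 1) - S.x (j + 1)‖ ^ 2 =
      (S.α (j + 1) ^ 2 / S.lam (j + 1) - S.α (j + 1) ^ 2 / S.α j) *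
        ⟪S.f' (S.x (j + 1)) - S.f' (S.x j), S.x (j + 1) - S.x j⟫ +
      S.α (j + 1) ^ 2 / S.α j * ⟪S.f' (S.x (j + 1)), S.x j - S.x (j + 1)⟫ := by
    rw [hL, hI1, hQ, sub_mul]
    have hA1 : S.α (j + 1) ^ 2 / S.lam (j + 1) *
        (S.lam (j + 1) * ‖S.f' (S.x (j + 1)) - S.f' (S.x j)‖ ^ 2) =
        S.α (j + 1) ^ 2 * ‖S.f' (S.x (j + 1)) - S.f' (S.x j)‖ ^ 2 := by
      field_simp
    have hA2 : S.α (j + 1) ^ 2 / S.α j *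
        (S.lam (j + 1) * ‖S.f' (S.x (j + 1)) - S.f' (S.x j)‖ ^ 2) =
        S.α (j + 1) ^ 2 * (‖S.f' (S.x j)‖ ^ 2 - ⟪S.f' (S.x (j + 1)), S.f' (S.x j)⟫) := by
      rw [hKey, ← mul_assoc, div_mul_cancel₀ _ hα0.ne']
    have hA4 : S.α (j + 1) ^ 2 / S.α j *
        (S.α j * ⟪S.f' (S.x (j + 1)), S.f' (S.x j)⟫) =
        S.α (j + 1) ^ 2 * ⟪S.f' (S.x (j + 1)), S.f' (S.x j)⟫ := by
      rw [← mul_assoc, div_mul_cancel₀ _ hα0.ne']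
    rw [hA1, hA2, hA4, hD]
    ring
  refine ⟨hid, ?_⟩
  simp only [AdaBB.M, AdaBB.P, AdaBB.Paux, Nat.add_sub_cancel, Nat.succ_ne_zero, if_false]
  rcases le_or_gt (S.α j) (S.lam (j + 1)) with h1 | h1
  · rw [if_pos h1, if_pos h1]
    have hA : S.α (j + 1) ^ 2 / S.lam (j + 1) - S.α (j + 1) ^ 2 / S.α j ≤ 0 := by
      rw [sub_nonpos, div_le_div_iff₀ hlm hα0]
      nlinarith
    have hIpos : (0:ℝ) ≤ ⟪S.f' (S.x (j + 1)) - S.f' (S.x j), S.x (j + 1) - S.x j⟫ := by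
      rw [hI1]; positivity
    have hB : (0:ℝ) ≤ S.α (j + 1) ^ 2 / S.α j := by positivity
    nlinarith [hid, mul_le_mul_of_nonneg_left hconvQ hB,
      mul_nonneg (neg_nonneg.mpr hA) hIpos]
  · have h1' : ¬ (S.α j ≤ S.lam (j + 1)) := not_le.mpr h1
    rcases lt_or_ge (S.α j / 2) (S.lam (j + 1)) with h2 | h2
    · rw [if_neg h1', if_pos h2, if_neg h1', if_pos h2]
      have hP : (0:ℝ) ≤ 2 * S.α (j + 1) ^ 2 / S.α j - S.α (j + 1) ^ 2 / S.lam (j + 1) := by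
        rw [sub_nonneg, div_le_div_iff₀ hlm hα0]
        nlinarith
      have hid2 : ‖S.x (j + 1 + 1) - S.x (j + 1)‖ ^ 2 =
          (S.α (j + 1) ^ 2 / (S.lam (j + 1) * S.α j) - S.α (j + 1) ^ 2 / S.α j ^ 2) *
            ‖S.x (j + 1) - S.x j‖ ^ 2 +
          (2 * S.α (j + 1) ^ 2 / S.α j - S.α (j + 1) ^ 2 / S.lam (j + 1)) *
            ⟪S.f' (S.x (j + 1)), S.x j - S.x (j + 1)⟫ := by
        rw [hid, hI1', hQ, hDx]
        generalize (⟪S.f' (S.x (j + 1)), S.f' (S.x j)⟫ : ℝ) = C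
        generalize ‖S.f' (S.x j)‖ ^ 2 = N0
        field_simp
        ring
      rw [hid2]
      have := mul_le_mul_of_nonneg_left hconvQ hP
      linarith
    · rw [if_neg h1', if_neg (not_lt.mpr h2), if_neg h1', if_neg (not_lt.mpr h2)]
      have hB : (0:ℝ) ≤ S.α (j + 1) ^ 2 / S.α j := by positivity
      have hA : (0:ℝ) ≤ S.α (j + 1) ^ 2 / S.lam (j + 1) - S.α (j + 1) ^ 2 / S.α j := by
        rw [sub_nonneg, div_le_div_iff₀ hα0 hlm]
        nlinarith
      have hCS : S.lam (j + 1) * ‖S.f' (S.x (j + 1)) - S.f' (S.x j)‖ ^ 2 ≤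
          ‖S.f' (S.x (j + 1)) - S.f' (S.x j)‖ * ‖S.x (j + 1) - S.x j‖ := by
        rw [← hI1]; exact real_inner_le_norm _ _
      have h4 : S.lam (j + 1) * ‖S.f' (S.x (j + 1)) - S.f' (S.x j)‖ ≤
          ‖S.x (j + 1) - S.x j‖ := by
        nlinarith [hCS, hnpos]
      have h5 : (S.lam (j + 1) * ‖S.f' (S.x (j + 1)) - S.f' (S.x j)‖) *
          (S.lam (j + 1) * ‖S.f' (S.x (j + 1)) - S.f' (S.x j)‖) ≤
          ‖S.x (j + 1) - S.x j‖ * ‖S.x (j + 1) - S.x j‖ :=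
        mul_le_mul h4 h4 (mul_nonneg hlm.le (norm_nonneg _)) (norm_nonneg _)
      have hI1le : S.lam (j + 1) * ‖S.f' (S.x (j + 1)) - S.f' (S.x j)‖ ^ 2 ≤
          ‖S.x (j + 1) - S.x j‖ ^ 2 / S.lam (j + 1) := by
        rw [le_div_iff₀ hlm]
        nlinarith [h5]
      have heq : (S.α (j + 1) ^ 2 / S.lam (j + 1) - S.α (j + 1) ^ 2 / S.α j) *
          (‖S.x (j + 1) - S.x j‖ ^ 2 / S.lam (j + 1)) =
          (S.α (j + 1) ^ 2 / S.lam (j + 1) ^ 2 - S.α (j + 1) ^ 2 / (S.α j * S.lam (j + 1))) *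
            ‖S.x (j + 1) - S.x j‖ ^ 2 := by
        generalize ‖S.x (j + 1) - S.x j‖ ^ 2 = Dx
        field_simp
      rw [hid, hI1]
      have t1 := mul_le_mul_of_nonneg_left hI1le hA
      have t2 := mul_le_mul_of_nonneg_left hconvQ hB
      linarith [t1, t2, heq]
end

section
/- For the general AdaBB iteration, the Lyapunov function Υ_k is monotone: for all k ≥ 1, Υ_{k+1} ≤ Υ_k − 2w_{k−1}·(f(x^{k−1}) − f_*) ≤ Υ_k. -/
open scoped RealInnerProductSpace
open Finset Filter

section Lemmas
open scoped RealInnerProductSpace Topology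
open Set Filter

variable {E : Type*} [NormedAddCommGroup E] [InnerProductSpace ℝ E] [CompleteSpace E]

lemma grad_convex_ineq {f : E → ℝ} (hconv : ConvexOn ℝ Set.univ f)
    {g x : E} (hg : HasGradientAt f g x) (y : E) :
    f x + ⟪g, y - x⟫ ≤ f y := by
  set d := y - x with hd
  have hline : HasDerivAt (fun t : ℝ => x + t • d) d 0 := by
    simpa using ((hasDerivAt_id (0 : ℝ)).smul_const d).const_add x
  have hf : HasFDerivAt f (InnerProductSpace.toDual ℝ E g) x := hg
  have hcomp : HasDerivAt (fun t : ℝ => f (x + t • d)) ⟪g, d⟫ 0 := by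
    have hf' : HasFDerivAt f (InnerProductSpace.toDual ℝ E g) ((fun t : ℝ => x + t • d) 0) := by
      simpa using hf
    have := hf'.comp_hasDerivAt (x := 0) hline
    simpa [InnerProductSpace.toDual_apply_apply, Function.comp_def] using this
  have htend : Tendsto (slope (fun t : ℝ => f (x + t • d)) 0) (𝓝[>] 0) (𝓝 ⟪g, d⟫) :=
    (hasDerivAt_iff_tendsto_slope.mp hcomp).mono_left
      (nhdsWithin_mono 0 (fun t ht => ne_of_gt ht))
  have hbound : ∀ᶠ t in 𝓝[>] (0:ℝ), slope (fun t : ℝ => f (x + t • d)) 0 t ≤ f y - f x := by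
    filter_upwards [Ioc_mem_nhdsGT_of_mem (by norm_num : (0:ℝ) ∈ Ico (0:ℝ) 1)] with t ht
    have ht0 : (0:ℝ) < t := ht.1
    have ht1 : t ≤ 1 := ht.2
    have hconvpt : f (x + t • d) ≤ (1 - t) * f x + t * f y := by
      have := hconv.2 (mem_univ x) (mem_univ y) (by linarith : (0:ℝ) ≤ 1 - t)
        (le_of_lt ht0) (by ring)
      calc f (x + t • d) = f ((1 - t) • x + t • y) := by
            congr 1; rw [hd]; module
        _ ≤ (1 - t) * f x + t * f y := by simpa [smul_eq_mul] using this
    rw [slope_def_field]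
    simp only [smul_zero, zero_smul, add_zero, sub_zero]
    rw [div_le_iff₀ ht0]
    nlinarith
  have := le_of_tendsto htend hbound
  linarith


-- case i scalar inequality
lemma adabb_alg1 (β lam a b t : ℝ) (hβ : 0 < β) (hbl : β ≤ lam)
    (hid : lam * (a - 2*t + b) = β * (b - t)) (hcs : t^2 ≤ a*b) (hb : 0 ≤ b) :
    a ≤ t := by
  have hlam : 0 < lam := lt_of_lt_of_le hβ hbl
  have h1 : (2*lam - β)*t = lam*a + (lam-β)*b := by linarith
  have h2 : 0 < 2*lam - β := by linarith
  have hsq : (lam*a + (lam-β)*b)^2 ≤ (2*lam-β)^2*(a*b) := by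
    calc (lam*a + (lam-β)*b)^2 = ((2*lam-β)*t)^2 := by rw [h1]
      _ = (2*lam-β)^2*t^2 := by ring
      _ ≤ (2*lam-β)^2*(a*b) := mul_le_mul_of_nonneg_left hcs (sq_nonneg _)
  have key : (a-b)*(lam^2*a - (lam-β)^2*b) ≤ 0 := by nlinarith [hsq]
  have hab : a ≤ b := by
    by_contra hcon
    push_neg at hcon
    have hmono : (lam-β)^2*b ≤ lam^2*b :=
      mul_le_mul_of_nonneg_right (by nlinarith) hb
    have h3 : (a-b)*((lam-β)^2*b) ≤ (a-b)*(lam^2*b) :=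
      mul_le_mul_of_nonneg_left hmono (by linarith)
    have h4 : lam^2*(a-b)^2 ≤ 0 := by nlinarith [key, h3]
    have h5 : 0 < lam^2*(a-b)^2 :=
      mul_pos (pow_pos hlam 2) (pow_pos (sub_pos.2 hcon) 2)
    linarith
  have h5 : (2*lam-β)*(t-a) = (lam-β)*(b-a) := by linear_combination h1
  have h6 : 0 ≤ (lam-β)*(b-a) := mul_nonneg (by linarith) (by linarith)
  by_contra hcon
  push_neg at hcon
  have : (2*lam-β)*(t-a) < 0 := mul_neg_of_pos_of_neg h2 (by linarith)
  linarith

-- case iii scalar inequality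
lemma adabb_alg3 (β lam a b t : ℝ) (hβ : 0 < β) (hlam : 0 < lam) (hlb : lam ≤ β/2)
    (hid : lam * (a - 2*t + b) = β * (b - t)) (hcs : t^2 ≤ a*b) (ha : 0 ≤ a) (hb : 0 ≤ b) :
    lam^2*(a - t) ≤ (β - lam)*β*b := by
  have h1 : (β - 2*lam)*t = (β-lam)*b - lam*a := by linarith
  rcases eq_or_lt_of_le hlb with heq | hlt
  · have hβ2 : β = 2*lam := by linarith
    subst hβ2
    have hab : lam*(a-b) = 0 := by linear_combination hid
    have hab' : a = b := by
      rcases mul_eq_zero.1 hab with h | h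
      · exact absurd h hlam.ne'
      · linarith
    subst hab'
    -- goal: lam^2*(a-t) ≤ (2*lam - lam)*(2*lam)*b  with b := a
    have hta : 0 ≤ a + t := by nlinarith [hcs, sq_nonneg (t+a), sq_nonneg (t-a)]
    nlinarith [mul_nonneg hta (sq_nonneg lam)]
  · have h2 : 0 < β - 2*lam := by linarith
    have hsq : ((β-lam)*b - lam*a)^2 ≤ (β-2*lam)^2*(a*b) := by
      calc ((β-lam)*b - lam*a)^2 = ((β-2*lam)*t)^2 := by rw [h1]
        _ = (β-2*lam)^2*t^2 := by ring
        _ ≤ (β-2*lam)^2*(a*b) := mul_le_mul_of_nonneg_left hcs (sq_nonneg _)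
    have key : (b-a)*((β-lam)^2*b - lam^2*a) ≤ 0 := by nlinarith [hsq]
    have hC : lam^2*a ≤ (β-lam)^2*b := by
      by_contra hcon
      push_neg at hcon
      have hmono : lam^2*b ≤ (β-lam)^2*b :=
        mul_le_mul_of_nonneg_right (by nlinarith) hb
      have hba : b < a := by
        by_contra h2'
        push_neg at h2'
        have := mul_le_mul_of_nonneg_left h2' (sq_nonneg lam)
        linarith
      have := mul_pos_of_neg_of_neg (show b - a < 0 by linarith)
        (show (β-lam)^2*b - lam^2*a < 0 by linarith)
      linarith
    have h3 : (β-2*lam)*(a-t) = (β-lam)*(a-b) := by linear_combination -h1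
    have h4 : lam^2*(a-b) ≤ (β-2*lam)*β*b := by nlinarith [hC]
    have h6 : (β-lam)*(lam^2*(a-b)) ≤ (β-lam)*((β-2*lam)*β*b) :=
      mul_le_mul_of_nonneg_left h4 (by linarith)
    have h3' : lam^2*((β-2*lam)*(a-t)) = lam^2*((β-lam)*(a-b)) := by rw [h3]
    have h5 : (β-2*lam)*(lam^2*(a-t)) ≤ (β-2*lam)*((β-lam)*β*b) := by nlinarith [h6, h3']
    exact (mul_le_mul_iff_right₀ h2).mp h5


namespace AdaBB

variable {n : ℕ}

lemma step_eq (S : AdaBB n) : ∀ k, S.x (k+1) = S.x k - S.α k • S.f' (S.x k)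
  | 0 => S.hx1
  | (k+1) => S.hstep k

lemma pos (S : AdaBB n) : ∀ k, 0 < S.α k ∧ 0 ≤ S.θ k := by
  intro k
  induction k with
  | zero => exact ⟨S.hα0, S.hθ0⟩
  | succ m ih =>
    obtain ⟨hα, hθ⟩ := ih
    have hlm := S.hlampos m
    rcases le_or_gt (S.α m) (S.lam (m+1)) with h1 | h1
    · obtain ⟨ha, hb⟩ := S.hcase1 m h1
      have hαpos : 0 < S.α (m+1) := by
        rw [ha]; exact mul_pos (Real.sqrt_pos.2 (by linarith)) hα
      exact ⟨hαpos, hb ▸ le_of_lt (div_pos hαpos hα)⟩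
    · rcases le_or_gt (S.lam (m+1)) (S.α m / 2) with h2 | h2
      · obtain ⟨ha, hb⟩ := S.hcase3 m h2
        have hαpos : 0 < S.α (m+1) := by
          rcases ha with ha | ha <;> rw [ha]
          · exact mul_pos (Real.sqrt_pos.2 (div_pos hα (by linarith))) hlm
          · exact div_pos hlm (Real.sqrt_pos.2 two_pos)
        exact ⟨hαpos, hb ▸ le_of_lt (div_pos hαpos hα)⟩
      · obtain ⟨ha, hb⟩ := S.hcase2 m h2 h1
        have hαpos : 0 < S.α (m+1) := by
          rcases ha with ha | ha <;> rw [ha]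
          · refine mul_pos (lt_min ?_ ?_) hα
            · exact Real.sqrt_pos.2 (div_pos hlm (by linarith))
            · exact Real.sqrt_pos.2 (div_pos (mul_pos (by linarith) hlm) (by linarith))
          · exact hlm
        refine ⟨hαpos, hb ▸ ?_⟩
        have : S.α (m+1) / S.lam (m+1) ≤ 2 * S.α (m+1) / S.α m := by
          rw [div_le_div_iff₀ hlm hα]
          nlinarith
        linarith

lemma lam_id (S : AdaBB n) (m : ℕ) :
    S.lam (m+1) * (‖S.f' (S.x (m+1))‖^2 - 2 * ⟪S.f' (S.x (m+1)), S.f' (S.x m)⟫ + ‖S.f' (S.x m)‖^2)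
      = S.α m * (‖S.f' (S.x m)‖^2 - ⟪S.f' (S.x (m+1)), S.f' (S.x m)⟫) := by
  set g1 := S.f' (S.x (m+1))
  set g0 := S.f' (S.x m)
  have hΔ : S.x (m+1) - S.x m = -(S.α m • g0) := by rw [S.step_eq m]; abel
  have hnz : ‖g1 - g0‖^2 ≠ 0 := pow_ne_zero _ (norm_ne_zero_iff.2 (sub_ne_zero.2 (S.hne m)))
  have h : S.lam (m+1) * ‖g1 - g0‖^2 = ⟪g1 - g0, S.x (m+1) - S.x m⟫ := by
    rw [S.hlam m, div_mul_cancel₀ _ hnz]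
  rw [hΔ, inner_neg_right, real_inner_smul_right, inner_sub_left,
    real_inner_self_eq_norm_sq, norm_sub_sq_real] at h
  have hc := real_inner_comm g0 g1
  linarith [h, hc]

lemma inner_sq_le (S : AdaBB n) (m : ℕ) :
    ⟪S.f' (S.x (m+1)), S.f' (S.x m)⟫^2 ≤ ‖S.f' (S.x (m+1))‖^2 * ‖S.f' (S.x m)‖^2 := by
  have h := real_inner_mul_inner_self_le (S.f' (S.x (m+1))) (S.f' (S.x m))
  rw [real_inner_self_eq_norm_sq, real_inner_self_eq_norm_sq] at h
  nlinarith [h]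

lemma star (S : AdaBB n) (j : ℕ) :
    S.α (j+1)^2 * ‖S.f' (S.x (j+1))‖^2 ≤
      S.Paux (j+1) * (S.α j * ⟪S.f' (S.x (j+1)), S.f' (S.x j)⟫) +
      S.M (j+1) * (S.α j^2 * ‖S.f' (S.x j)‖^2) := by
  have hid := S.lam_id j
  have hcs := S.inner_sq_le j
  set g1 := S.f' (S.x (j+1)) with hg1
  set g0 := S.f' (S.x j) with hg0
  set a := ‖g1‖^2 with ha'
  set b := ‖g0‖^2 with hb'
  set t := (⟪g1, g0⟫ : ℝ) with ht'
  have hβ : 0 < S.α j := (S.pos j).1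
  have hα1 : 0 < S.α (j+1) := (S.pos (j+1)).1
  have hlm : 0 < S.lam (j+1) := S.hlampos j
  have ha : 0 ≤ a := by positivity
  have hb : 0 ≤ b := by positivity
  rw [AdaBB.M, AdaBB.Paux]
  simp only [Nat.add_sub_cancel]
  split_ifs with h1 h2
  · -- case i
    have hat := adabb_alg1 (S.α j) (S.lam (j+1)) a b t hβ h1 hid hcs hb
    have h0 : S.α (j+1)^2/S.α j*(S.α j*t) = S.α (j+1)^2*t := by field_simp
    have := mul_le_mul_of_nonneg_left hat (sq_nonneg (S.α (j+1)))
    linarith [this, h0]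
  · -- case ii
    have hlt : S.lam (j+1) < S.α j := lt_of_not_ge h1
    refine le_of_eq ?_
    calc S.α (j+1)^2 * a = S.α (j+1)^2/S.lam (j+1) * (S.lam (j+1)*a) := by
          field_simp
      _ = S.α (j+1)^2/S.lam (j+1) *
          ((2*S.lam (j+1) - S.α j)*t + (S.α j - S.lam (j+1))*b) := by
          congr 1; linarith [hid]
      _ = (2*S.α (j+1)^2/S.α j - S.α (j+1)^2/S.lam (j+1)) * (S.α j*t) +
          (S.α (j+1)^2/(S.lam (j+1)*S.α j) - S.α (j+1)^2/S.α j^2) * (S.α j^2*b) := by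
          field_simp
  · -- case iii
    have hlb : S.lam (j+1) ≤ S.α j / 2 := le_of_not_gt h2
    have h3 := adabb_alg3 (S.α j) (S.lam (j+1)) a b t hβ hlm hlb hid hcs ha hb
    have hre : S.α (j+1)^2/S.α j*(S.α j*t) +
        (S.α (j+1)^2/S.lam (j+1)^2 - S.α (j+1)^2/(S.α j*S.lam (j+1))) * (S.α j^2*b)
        - S.α (j+1)^2*a
        = S.α (j+1)^2/S.lam (j+1)^2 *
          ((S.α j - S.lam (j+1))*S.α j*b - S.lam (j+1)^2*(a - t)) := by
      field_simp; ring
    have h4 : 0 ≤ S.α (j+1)^2/S.lam (j+1)^2 *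
        ((S.α j - S.lam (j+1))*S.α j*b - S.lam (j+1)^2*(a - t)) :=
      mul_nonneg (by positivity) (by linarith)
    linarith [hre, h4]

lemma M_le_half (S : AdaBB n) (m : ℕ) : S.M (m+1) ≤ 1/2 := by
  have hβ : 0 < S.α m := (S.pos m).1
  have hα1 : 0 < S.α (m+1) := (S.pos (m+1)).1
  have hθ : 0 ≤ S.θ m := (S.pos m).2
  have hlm : 0 < S.lam (m+1) := S.hlampos m
  rw [AdaBB.M]
  simp only [Nat.add_sub_cancel]
  split_ifs with h1 h2
  · norm_num
  · have hlt : S.lam (m+1) < S.α m := lt_of_not_ge h1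
    obtain ⟨ha, -⟩ := S.hcase2 m h2 hlt
    have key : 2*S.α (m+1)^2*(S.α m - S.lam (m+1)) ≤ S.lam (m+1)*S.α m^2 := by
      rcases ha with ha | ha
      · have hle : S.α (m+1) ≤ Real.sqrt (S.lam (m+1)/(2*(S.α m - S.lam (m+1))))*S.α m := by
          rw [ha]; exact mul_le_mul_of_nonneg_right (min_le_left _ _) hβ.le
        have hsq : S.α (m+1)^2 ≤ (S.lam (m+1)/(2*(S.α m - S.lam (m+1))))*S.α m^2 := by
          calc S.α (m+1)^2 ≤ (Real.sqrt (S.lam (m+1)/(2*(S.α m - S.lam (m+1))))*S.α m)^2 :=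
                pow_le_pow_left₀ hα1.le hle 2
            _ = (S.lam (m+1)/(2*(S.α m - S.lam (m+1))))*S.α m^2 := by
                rw [mul_pow, Real.sq_sqrt (div_nonneg hlm.le (by linarith))]
        have hpos : 0 < S.α m - S.lam (m+1) := by linarith
        have h5 : (S.lam (m+1)/(2*(S.α m - S.lam (m+1))))*S.α m^2*(2*(S.α m - S.lam (m+1)))
            = S.lam (m+1)*S.α m^2 := by field_simp
        nlinarith [mul_le_mul_of_nonneg_right hsq (by linarith : (0:ℝ) ≤ 2*(S.α m - S.lam (m+1)))]
      · rw [ha]; nlinarith [sq_nonneg (S.α m - S.lam (m+1)), hlm.le]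
    have hre : 1/2 - (S.α (m+1)^2/(S.lam (m+1)*S.α m) - S.α (m+1)^2/S.α m^2)
        = (S.lam (m+1)*S.α m^2 - 2*S.α (m+1)^2*(S.α m - S.lam (m+1)))/(2*S.lam (m+1)*S.α m^2) := by
      field_simp
    have h6 : 0 ≤ (S.lam (m+1)*S.α m^2 - 2*S.α (m+1)^2*(S.α m - S.lam (m+1)))/(2*S.lam (m+1)*S.α m^2) :=
      div_nonneg (by linarith) (by positivity)
    linarith
  · have hlb : S.lam (m+1) ≤ S.α m / 2 := le_of_not_gt h2
    obtain ⟨ha, -⟩ := S.hcase3 m hlb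
    have hblam : S.lam (m+1) < S.α m := by linarith
    have key : 2*S.α (m+1)^2*(S.α m - S.lam (m+1)) ≤ S.lam (m+1)^2*S.α m := by
      rcases ha with ha | ha
      · have hpos : 0 < S.α m - S.lam (m+1) := by linarith
        have hsq : S.α (m+1)^2 = S.α m/(2*(S.α m - S.lam (m+1)))*S.lam (m+1)^2 := by
          rw [ha, mul_pow, Real.sq_sqrt (div_nonneg hβ.le (by linarith))]
        rw [hsq]
        have hid2 : 2*(S.α m/(2*(S.α m - S.lam (m+1)))*S.lam (m+1)^2)*(S.α m - S.lam (m+1))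
            = S.lam (m+1)^2*S.α m := by field_simp
        linarith
      · have hsq : S.α (m+1)^2 = S.lam (m+1)^2/2 := by
          rw [ha, div_pow, Real.sq_sqrt (by norm_num : (0:ℝ) ≤ 2)]
        rw [hsq]; nlinarith [sq_nonneg (S.lam (m+1))]
    have hre : 1/2 - (S.α (m+1)^2/S.lam (m+1)^2 - S.α (m+1)^2/(S.α m*S.lam (m+1)))
        = (S.lam (m+1)^2*S.α m - 2*S.α (m+1)^2*(S.α m - S.lam (m+1)))/(2*S.lam (m+1)^2*S.α m) := by
      field_simp
    have h6 : 0 ≤ (S.lam (m+1)^2*S.α m - 2*S.α (m+1)^2*(S.α m - S.lam (m+1)))/(2*S.lam (m+1)^2*S.α m) :=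
      div_nonneg (by linarith) (by positivity)
    linarith

lemma Paux_eq (S : AdaBB n) (m : ℕ) : S.Paux (m+1) = S.θ (m+1) * S.α (m+1) := by
  rw [AdaBB.Paux]
  simp only [Nat.add_sub_cancel]
  split_ifs with h1 h2
  · obtain ⟨-, hb⟩ := S.hcase1 m h1; rw [hb]; ring
  · obtain ⟨-, hb⟩ := S.hcase2 m h2 (lt_of_not_ge h1); rw [hb]; ring
  · obtain ⟨-, hb⟩ := S.hcase3 m (le_of_not_gt h2); rw [hb]; ring

lemma Paux_pos (S : AdaBB n) (m : ℕ) : 0 < S.Paux (m+1) := by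
  have hβ : 0 < S.α m := (S.pos m).1
  have hα1 : 0 < S.α (m+1) := (S.pos (m+1)).1
  have hlm : 0 < S.lam (m+1) := S.hlampos m
  rw [AdaBB.Paux]
  simp only [Nat.add_sub_cancel]
  split_ifs with h1 h2
  · positivity
  · have hlt : S.lam (m+1) < S.α m := lt_of_not_ge h1
    have hre : 2*S.α (m+1)^2/S.α m - S.α (m+1)^2/S.lam (m+1)
        = S.α (m+1)^2*(2*S.lam (m+1) - S.α m)/(S.α m*S.lam (m+1)) := by field_simp
    have h3 : 0 < S.α (m+1)^2*(2*S.lam (m+1) - S.α m)/(S.α m*S.lam (m+1)) :=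
      div_pos (mul_pos (pow_pos hα1 2) (by linarith)) (by positivity)
    linarith
  · positivity

lemma w_nonneg (S : AdaBB n) : ∀ k, 0 ≤ S.w k := by
  intro k
  cases k with
  | zero => norm_num [AdaBB.w, AdaBB.P]
  | succ m =>
    have hβ : 0 < S.α (m+1) := (S.pos (m+1)).1
    have hθ : 0 ≤ S.θ (m+1) := (S.pos (m+1)).2
    have hlm : 0 < S.lam (m+2) := S.hlampos (m+1)
    have hθβ : 0 ≤ S.θ (m+1) * S.α (m+1) := mul_nonneg hθ hβ.le
    have hα2 : 0 < S.α (m+2) := (S.pos (m+2)).1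
    rw [AdaBB.w, AdaBB.P, AdaBB.P]
    rw [if_neg (Nat.succ_ne_zero m), if_neg (Nat.succ_ne_zero (m+1)), S.Paux_eq m]
    have key : S.Paux (m+2) ≤ S.α (m+1) + S.θ (m+1) * S.α (m+1) := by
      rw [AdaBB.Paux]
      simp only [show m+2-1 = m+1 from rfl]
      split_ifs with h1 h2
      · obtain ⟨ha, -⟩ := S.hcase1 (m+1) h1
        have hsq : S.α (m+2)^2 = (1 + S.θ (m+1))*S.α (m+1)^2 := by
          rw [ha, mul_pow, Real.sq_sqrt (by linarith)]
        rw [hsq]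
        have hq : (1 + S.θ (m+1))*S.α (m+1)^2/S.α (m+1) = (1 + S.θ (m+1))*S.α (m+1) := by
          field_simp
        rw [hq]; ring_nf; linarith
      · have hlt : S.lam (m+2) < S.α (m+1) := lt_of_not_ge h1
        have hpos : 0 < 2*S.lam (m+2) - S.α (m+1) := by linarith
        obtain ⟨ha, -⟩ := S.hcase2 (m+1) h2 hlt
        have key2 : S.α (m+2)^2*(2*S.lam (m+2) - S.α (m+1))
            ≤ (1 + S.θ (m+1))*S.lam (m+2)*S.α (m+1)^2 := by
          rcases ha with ha | ha
          · have hle : S.α (m+2) ≤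
                Real.sqrt ((1 + S.θ (m+1))*S.lam (m+2)/(2*S.lam (m+2) - S.α (m+1)))*S.α (m+1) := by
              rw [ha]; exact mul_le_mul_of_nonneg_right (min_le_right _ _) hβ.le
            have hsq : S.α (m+2)^2 ≤
                ((1 + S.θ (m+1))*S.lam (m+2)/(2*S.lam (m+2) - S.α (m+1)))*S.α (m+1)^2 := by
              calc S.α (m+2)^2
                  ≤ (Real.sqrt ((1 + S.θ (m+1))*S.lam (m+2)/(2*S.lam (m+2) - S.α (m+1)))*S.α (m+1))^2 :=
                    pow_le_pow_left₀ hα2.le hle 2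
                _ = ((1 + S.θ (m+1))*S.lam (m+2)/(2*S.lam (m+2) - S.α (m+1)))*S.α (m+1)^2 := by
                    rw [mul_pow, Real.sq_sqrt
                      (div_nonneg (mul_nonneg (by linarith) hlm.le) hpos.le)]
            have h5 : ((1 + S.θ (m+1))*S.lam (m+2)/(2*S.lam (m+2) - S.α (m+1)))*S.α (m+1)^2
                *(2*S.lam (m+2) - S.α (m+1)) = (1 + S.θ (m+1))*S.lam (m+2)*S.α (m+1)^2 := by
              field_simp
              exact div_self (ne_of_gt (by linarith))
            linarith [mul_le_mul_of_nonneg_right hsq hpos.le, h5]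
          · rw [ha]
            nlinarith [mul_nonneg (mul_nonneg hθ hlm.le) (sq_nonneg (S.α (m+1))),
              mul_pos (mul_pos hlm (by linarith : (0:ℝ) < S.α (m+1) - S.lam (m+2)))
                (by linarith : (0:ℝ) < 2*S.lam (m+2) + S.α (m+1))]
        have hre : (S.α (m+1) + S.θ (m+1)*S.α (m+1))
            - (2*S.α (m+2)^2/S.α (m+1) - S.α (m+2)^2/S.lam (m+2))
            = ((1 + S.θ (m+1))*S.lam (m+2)*S.α (m+1)^2
              - S.α (m+2)^2*(2*S.lam (m+2) - S.α (m+1)))/(S.lam (m+2)*S.α (m+1)) := by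
          field_simp
        have h6 : 0 ≤ ((1 + S.θ (m+1))*S.lam (m+2)*S.α (m+1)^2
              - S.α (m+2)^2*(2*S.lam (m+2) - S.α (m+1)))/(S.lam (m+2)*S.α (m+1)) :=
          div_nonneg (by linarith) (by positivity)
        linarith
      · have hlb : S.lam (m+2) ≤ S.α (m+1) / 2 := le_of_not_gt h2
        obtain ⟨ha, -⟩ := S.hcase3 (m+1) hlb
        have key3 : S.α (m+2)^2 ≤ S.lam (m+2)^2 := by
          rcases ha with ha | ha
          · have hpos : 0 < S.α (m+1) - S.lam (m+2) := by linarith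
            have hsq : S.α (m+2)^2 = S.α (m+1)/(2*(S.α (m+1) - S.lam (m+2)))*S.lam (m+2)^2 := by
              rw [ha, mul_pow, Real.sq_sqrt (by positivity)]
            have hc : S.α (m+1)/(2*(S.α (m+1) - S.lam (m+2))) ≤ 1 :=
              (div_le_one (by linarith)).2 (by linarith)
            rw [hsq]
            nlinarith [mul_nonneg (by linarith : (0:ℝ) ≤ 1 - S.α (m+1)/(2*(S.α (m+1) - S.lam (m+2))))
              (sq_nonneg (S.lam (m+2)))]
          · have hsq : S.α (m+2)^2 = S.lam (m+2)^2/2 := by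
              rw [ha, div_pow, Real.sq_sqrt (by norm_num : (0:ℝ) ≤ 2)]
            rw [hsq]; nlinarith [sq_nonneg (S.lam (m+2))]
        have hre : (S.α (m+1) + S.θ (m+1)*S.α (m+1)) - S.α (m+2)^2/S.α (m+1)
            = ((1 + S.θ (m+1))*S.α (m+1)^2 - S.α (m+2)^2)/S.α (m+1) := by
          field_simp
        have hnum : S.α (m+2)^2 ≤ (1 + S.θ (m+1))*S.α (m+1)^2 := by nlinarith
        have h6 : 0 ≤ ((1 + S.θ (m+1))*S.α (m+1)^2 - S.α (m+2)^2)/S.α (m+1) :=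
          div_nonneg (by linarith) hβ.le
        linarith
    linarith

end AdaBB
end Lemmas
/-- Lemma 3.4: monotonicity of the Lyapunov function `Υ_k` along the general AdaBB iteration:
for all `k ≥ 1`, `Υ_{k+1} ≤ Υ_k - 2·w_{k-1}·(f(x^{k-1}) - f_*) ≤ Υ_k`. -/
theorem adabb_lyapunov_monotone (n : ℕ) (S : AdaBB n)
    (xs : EuclideanSpace ℝ (Fin n)) (hxs : ∀ y, S.f xs ≤ S.f y) :
    ∀ k, 1 ≤ k →
      S.Upsilon xs (k + 1) ≤
        S.Upsilon xs k - 2 * S.w (k - 1) * (S.f (S.x (k - 1)) - S.f xs) ∧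
      S.Upsilon xs k - 2 * S.w (k - 1) * (S.f (S.x (k - 1)) - S.f xs) ≤ S.Upsilon xs k := by
  intro k hk
  obtain ⟨j, rfl⟩ : ∃ j, k = j + 1 := ⟨k - 1, (Nat.succ_pred_eq_of_pos hk).symm⟩
  set g1 := S.f' (S.x (j+1)) with hg1
  set g0 := S.f' (S.x j) with hg0
  have hβ : 0 < S.α j := (S.pos j).1
  have hαk : 0 < S.α (j+1) := (S.pos (j+1)).1
  have hδ0 : 0 ≤ S.f (S.x j) - S.f xs := sub_nonneg.2 (hxs _)
  have hδ1 : 0 ≤ S.f (S.x (j+1)) - S.f xs := sub_nonneg.2 (hxs _)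
  have hconv1 : S.f (S.x (j+1)) - S.f xs ≤ ⟪g1, S.x (j+1) - xs⟫ := by
    have h := grad_convex_ineq S.hconv (S.hgrad (S.x (j+1))) xs
    have h2 : (⟪g1, xs - S.x (j+1)⟫ : ℝ) = -⟪g1, S.x (j+1) - xs⟫ := by
      rw [← inner_neg_right]; congr 1; abel
    rw [h2] at h; linarith
  have hconv2 : S.f (S.x (j+1)) - S.f (S.x j) ≤ -(S.α j * ⟪g1, g0⟫) := by
    have h := grad_convex_ineq S.hconv (S.hgrad (S.x (j+1))) (S.x j)
    have hx : S.x j - S.x (j+1) = S.α j • g0 := by rw [S.step_eq j]; abel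
    rw [hx, real_inner_smul_right] at h
    linarith
  have hstar := S.star j
  have hM2 := S.M_le_half (j+1)
  have hPpos := S.Paux_pos j
  have hwn := S.w_nonneg j
  have hxs2 : S.x (j+1+1) - xs = (S.x (j+1) - xs) - S.α (j+1) • g1 := by
    rw [S.hstep j]; abel
  have hexp : ‖S.x (j+1+1) - xs‖^2 = ‖S.x (j+1) - xs‖^2
      - 2*S.α (j+1)*⟪g1, S.x (j+1) - xs⟫ + S.α (j+1)^2*‖g1‖^2 := by
    rw [hxs2, norm_sub_sq_real, real_inner_smul_right, norm_smul, Real.norm_eq_abs,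
      mul_pow, sq_abs, real_inner_comm]
    ring
  have hn2 : ‖S.x (j+1+1) - S.x (j+1)‖^2 = S.α (j+1)^2*‖g1‖^2 := by
    have hx : S.x (j+1+1) - S.x (j+1) = -(S.α (j+1) • g1) := by rw [S.hstep j]; abel
    rw [hx, norm_neg, norm_smul, Real.norm_eq_abs, mul_pow, sq_abs]
  have hn1 : ‖S.x (j+1) - S.x j‖^2 = S.α j^2*‖g0‖^2 := by
    have hx : S.x (j+1) - S.x j = -(S.α j • g0) := by rw [S.step_eq j]; abel
    rw [hx, norm_neg, norm_smul, Real.norm_eq_abs, mul_pow, sq_abs]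
  have hMa : 2*S.M (j+1+1)*(S.α (j+1)^2*‖g1‖^2) ≤ S.α (j+1)^2*‖g1‖^2 := by
    have h0 : 0 ≤ S.α (j+1)^2*‖g1‖^2 := by positivity
    nlinarith [mul_le_mul_of_nonneg_right hM2 h0]
  have hP1 : S.P (j+1) = S.Paux (j+1) := by simp [AdaBB.P]
  have c1 : 2*S.α (j+1)*(S.f (S.x (j+1)) - S.f xs) ≤ 2*S.α (j+1)*⟪g1, S.x (j+1) - xs⟫ :=
    mul_le_mul_of_nonneg_left hconv1 (by positivity)
  have c2 : 2*S.Paux (j+1)*(S.f (S.x (j+1)) - S.f (S.x j))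
      ≤ 2*S.Paux (j+1)*(-(S.α j * ⟪g1, g0⟫)) :=
    mul_le_mul_of_nonneg_left hconv2 (by positivity)
  constructor
  · simp only [AdaBB.Upsilon, AdaBB.w, Nat.add_sub_cancel]
    rw [hP1, hexp, hn1, hn2]
    linarith [hstar, hMa, c1, c2]
  · simp only [Nat.add_sub_cancel]
    have h0 : 0 ≤ 2*S.w j*(S.f (S.x j) - S.f xs) :=
      mul_nonneg (mul_nonneg (by norm_num) hwn) hδ0
    linarith
end
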